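/- Let v be a bounded isometry on a complex Hilbert space H and set Hᵤ := ⋂_{n≥0} vⁿ(H) (the intersection of the ranges of all powers of v). Then v(Hᵤ) = Hᵤ, v*(Hᵤ) ⊆ Hᵤ, and the restriction of v to Hᵤ is a unitary operator on Hᵤ (a surjective isometry of Hᵤ onto itself). -/

import Mathlib

theorem stmt_9 {H : Type*} [NormedAddCommGroup H] [InnerProductSpace ℂ H] [CompleteSpace H]
    (v : H →L[ℂ] H) (hv : ContinuousLinearMap.adjoint v * v = 1)
    (Hu : Set H) (hHu : Hu = ⋂ n : ℕ, Set.range (v ^ n : H →L[ℂ] H)) :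
    v '' Hu = Hu ∧ (ContinuousLinearMap.adjoint v) '' Hu ⊆ Hu ∧
      (∀ x ∈ Hu, ‖v x‖ = ‖x‖) ∧ Set.BijOn v Hu Hu := by
  have hva : ∀ x, ContinuousLinearMap.adjoint v (v x) = x := by
    intro x
    have := congrArg (fun f : H →L[ℂ] H => f x) hv
    simpa using this
  have hnorm : ∀ x : H, ‖v x‖ = ‖x‖ := by
    intro x
    have h1 : (inner ℂ (v x) (v x) : ℂ) = inner ℂ x x := by
      rw [← ContinuousLinearMap.adjoint_inner_left, hva]
    rw [inner_self_eq_norm_sq_to_K, inner_self_eq_norm_sq_to_K] at h1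
    have : ‖v x‖ ^ 2 = ‖x‖ ^ 2 := by exact_mod_cast h1
    nlinarith [norm_nonneg (v x), norm_nonneg x]
  have hmem : ∀ x, x ∈ Hu ↔ ∀ n : ℕ, x ∈ Set.range (v ^ n : H →L[ℂ] H) := by
    intro x; rw [hHu]; simp [Set.mem_iInter]
  -- adjoint maps Hu into Hu
  have hadj : ∀ x ∈ Hu, ContinuousLinearMap.adjoint v x ∈ Hu := by
    intro x hx
    rw [hmem] at hx ⊢
    intro n
    obtain ⟨y, hy⟩ := hx (n + 1)
    refine ⟨y, ?_⟩
    have : x = v ((v ^ n : H →L[ℂ] H) y) := by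
      rw [← hy, pow_succ']
      rfl
    rw [this, hva]
  -- v maps Hu into Hu
  have hvmap : ∀ x ∈ Hu, v x ∈ Hu := by
    intro x hx
    rw [hmem] at hx ⊢
    intro n
    obtain ⟨y, hy⟩ := hx n
    refine ⟨v y, ?_⟩
    rw [← hy]
    calc (v ^ n : H →L[ℂ] H) (v y) = ((v ^ n * v : H →L[ℂ] H)) y := rfl
      _ = ((v * v ^ n : H →L[ℂ] H)) y := by rw [← pow_succ, pow_succ']
      _ = v ((v ^ n : H →L[ℂ] H) y) := rfl
  -- every x in Hu is v of something in Hu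
  have hsurj : ∀ x ∈ Hu, ∃ z ∈ Hu, v z = x := by
    intro x hx
    refine ⟨ContinuousLinearMap.adjoint v x, hadj x hx, ?_⟩
    obtain ⟨w, hw⟩ := (hmem x).1 hx 1
    have hw' : v w = x := by simpa using hw
    rw [← hw', hva]
  have himg : v '' Hu = Hu := by
    apply Set.Subset.antisymm
    · rintro _ ⟨x, hx, rfl⟩; exact hvmap x hx
    · intro x hx
      obtain ⟨z, hz, hzx⟩ := hsurj x hx
      exact ⟨z, hz, hzx⟩
  have hinj : Function.Injective v := by
    intro a b hab
    have : ‖a - b‖ = 0 := by rw [← hnorm (a - b), map_sub, hab, sub_self, norm_zero]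
    simpa [sub_eq_zero] using norm_eq_zero.mp this
  refine ⟨himg, ?_, fun x _ => hnorm x, ?_⟩
  · rintro _ ⟨x, hx, rfl⟩; exact hadj x hx
  · exact ⟨fun x hx => hvmap x hx, fun a _ b _ h => hinj h,
      fun x hx => (hsurj x hx).imp fun z ⟨hz, h⟩ => ⟨hz, h⟩⟩
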